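/- Let b > 0, σ > 0, α, β > −1, η, μ ∈ ℝ, and n ∈ ℕ. Assume the Gauss–Jacobi hypothesis holds for ξ_0,…,ξ_n and ω_0,…,ω_n, and set x_j = b((1+ξ_j)/2)^{1/σ}, w_j = (1/σ)(b^σ/2)^{α+β+1} ω_j, and w_j^{(1)} = w_j · x_j^{2σ(η+μ−β)}. Then for every function f in the linear span of {x^{2σ(β−μ−η)+kσ} : k = 0, 1, …, 2n+1}, one has ∫_0^b f(x) x^{σ(2(η+μ)−β+1)−1} (b^σ − x^σ)^α dx = Σ_{j=0}^{n} w_j^{(1)} f(x_j). -/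

import Mathlib

open Real MeasureTheory Finset

lemma aux_term (b σ α β η μ t : ℝ) (hb : 0 < b) (hσ : 0 < σ)
    (ht : t ∈ Set.Ioo (-1:ℝ) 1) (k : ℕ) :
    (b * ((1/σ) * (((1+t)/2) ^ (1/σ - 1) * (1/2)))) *
      ((b * ((1+t)/2) ^ (1/σ)) ^ (2*σ*(β-μ-η) + (k:ℕ)*σ) *
        ((b * ((1+t)/2) ^ (1/σ)) ^ (σ*(2*(η+μ)-β+1) - 1) *
          (b^σ - (b*((1+t)/2) ^ (1/σ))^σ)^α)) =
    (1/σ * (b^σ/2) ^ (α+β+1)) * ((b^σ/2 * (1+t))^k * ((1-t)^α * (1+t)^β)) := by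
  obtain ⟨ht1, ht2⟩ := ht
  have hσ' : σ ≠ 0 := hσ.ne'
  set s : ℝ := (1+t)/2 with hsdef
  have hs0 : 0 < s := by simp only [hsdef]; linarith
  have hs1 : s < 1 := by simp only [hsdef]; linarith
  set x : ℝ := b * s ^ (1/σ) with hxdef
  have hsp : (0:ℝ) < s ^ (1/σ) := rpow_pos_of_pos hs0 _
  have hx : 0 < x := mul_pos hb hsp
  have hA0 : (0:ℝ) < b ^ σ := rpow_pos_of_pos hb _
  have hxσ : x ^ σ = b ^ σ * s := by
    rw [hxdef, mul_rpow hb.le hsp.le, ← rpow_mul hs0.le, one_div,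
      inv_mul_cancel₀ hσ', rpow_one]
  have hAs : (0:ℝ) < b ^ σ * s := mul_pos hA0 hs0
  -- combine the two x-powers
  have e1 : x ^ (2*σ*(β-μ-η) + (k:ℕ)*σ) * x ^ (σ*(2*(η+μ)-β+1) - 1)
      = (b^σ*s)^β * ((b^σ*s)^(k:ℕ) * ((b^σ*s) * x⁻¹)) := by
    rw [← rpow_add hx,
      show 2*σ*(β-μ-η) + (k:ℕ)*σ + (σ*(2*(η+μ)-β+1) - 1) = σ*(β+(k:ℕ)+1) + (-1) by ring,
      rpow_add hx, rpow_neg_one, rpow_mul hx.le, hxσ,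
      show β+(k:ℕ)+1 = β + ((k:ℕ)+1) by ring, rpow_add hAs,
      show ((k:ℕ)+1 : ℝ) = ((k:ℕ):ℝ) + 1 by push_cast; ring, rpow_add hAs,
      rpow_one, rpow_natCast]
    ring
  have e2 : b^σ - x^σ = b^σ/2 * (1-t) := by rw [hxσ, hsdef]; ring
  have e3 : (b^σ/2 * (1-t))^α = (b^σ/2)^α * (1-t)^α :=
    mul_rpow (by positivity) (by linarith)
  have e4 : (b^σ*s)^β = (b^σ/2)^β * (1+t)^β := by
    rw [show b^σ*s = b^σ/2 * (1+t) by rw [hsdef]; ring]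
    exact mul_rpow (by positivity) (by linarith)
  have e5 : ((1+t)/2) ^ (1/σ - 1) = s ^ (1/σ) * s⁻¹ := by
    rw [← hsdef, rpow_sub hs0, rpow_one]; ring
  have e6 : (b^σ/2) ^ (α+β+1) = (b^σ/2)^α * (b^σ/2)^β * (b^σ/2) := by
    rw [rpow_add (by positivity), rpow_add (by positivity), rpow_one]
  have e7 : (b^σ*s : ℝ)^(k:ℕ) = (b^σ/2 * (1+t))^k := by
    rw [show b^σ*s = b^σ/2 * (1+t) by rw [hsdef]; ring]
  calc (b * ((1/σ) * (s ^ (1/σ - 1) * (1/2)))) *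
      (x ^ (2*σ*(β-μ-η) + (k:ℕ)*σ) * (x ^ (σ*(2*(η+μ)-β+1) - 1) * (b^σ - x^σ)^α))
      = (b * ((1/σ) * (s ^ (1/σ) * s⁻¹ * (1/2)))) *
        ((x ^ (2*σ*(β-μ-η) + (k:ℕ)*σ) * x ^ (σ*(2*(η+μ)-β+1) - 1)) * (b^σ/2 * (1-t))^α) := by
        rw [← e5, e2]; ring
    _ = (b * ((1/σ) * (s ^ (1/σ) * s⁻¹ * (1/2)))) *
        (((b^σ/2)^β * (1+t)^β * ((b^σ/2 * (1+t))^k * ((b^σ*s) * x⁻¹))) *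
          ((b^σ/2)^α * (1-t)^α)) := by rw [e1, e4, e7, e3]
    _ = (1/σ * ((b^σ/2)^α * (b^σ/2)^β * (b^σ/2))) *
        ((b^σ/2 * (1+t))^k * ((1-t)^α * (1+t)^β)) := by
        have cancel : b * s ^ (1/σ) * s⁻¹ * ((b^σ*s) * x⁻¹) = b^σ := by
          rw [hxdef]; field_simp
        linear_combination ((1/σ)*(1/2)*(b^σ/2)^β*(1+t)^β*((b^σ/2*(1+t))^k)*(b^σ/2)^α*(1-t)^α) * cancel
    _ = (1/σ * (b^σ/2) ^ (α+β+1)) * ((b^σ/2 * (1+t))^k * ((1-t)^α * (1+t)^β)) := by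
        rw [e6]

section
variable {b σ : ℝ}

lemma aux_phi_sigma (hb : 0 < b) (hσ : 0 < σ) {u : ℝ} (hu : 0 < (1+u)/2) :
    (b * ((1+u)/2) ^ (1/σ)) ^ σ = b ^ σ * ((1+u)/2) := by
  rw [mul_rpow hb.le (rpow_pos_of_pos hu _).le, ← rpow_mul hu.le, one_div,
    inv_mul_cancel₀ hσ.ne', rpow_one]

lemma aux_img (hb : 0 < b) (hσ : 0 < σ) :
    (fun t => b * ((1+t)/2) ^ (1/σ)) '' Set.Ioo (-1:ℝ) 1 = Set.Ioo 0 b := by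
  ext x
  constructor
  · rintro ⟨t, ⟨ht1, ht2⟩, rfl⟩
    have hs0 : 0 < (1+t)/2 := by linarith
    have hs1 : (1+t)/2 < 1 := by linarith
    constructor
    · positivity
    · have : ((1+t)/2) ^ (1/σ) < 1 := rpow_lt_one hs0.le hs1 (by positivity)
      calc b * ((1+t)/2) ^ (1/σ) < b * 1 := by
            exact mul_lt_mul_of_pos_left this hb
        _ = b := mul_one b
  · rintro ⟨hx0, hxb⟩
    refine ⟨2 * (x/b) ^ σ - 1, ⟨?_, ?_⟩, ?_⟩
    · have : 0 < (x/b) ^ σ := rpow_pos_of_pos (by positivity) _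
      linarith
    · have h1 : x/b < 1 := (div_lt_one hb).2 hxb
      have : (x/b) ^ σ < 1 := rpow_lt_one (by positivity) h1 hσ
      linarith
    · show b * ((1 + (2 * (x/b) ^ σ - 1)) / 2) ^ (1/σ) = x
      have : (1 + (2 * (x/b) ^ σ - 1)) / 2 = (x/b) ^ σ := by ring
      rw [this, ← rpow_mul (by positivity), mul_one_div_cancel hσ.ne', rpow_one]
      field_simp

lemma aux_inj (hb : 0 < b) (hσ : 0 < σ) :
    Set.InjOn (fun t => b * ((1+t)/2) ^ (1/σ)) (Set.Ioo (-1:ℝ) 1) := by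
  apply StrictMonoOn.injOn
  intro t1 ht1 t2 ht2 h
  have hs1 : 0 < (1+t1)/2 := by have := ht1.1; linarith
  show b * ((1+t1)/2) ^ (1/σ) < b * ((1+t2)/2) ^ (1/σ)
  apply mul_lt_mul_of_pos_left _ hb
  exact rpow_lt_rpow hs1.le (by linarith) (by positivity)

lemma aux_deriv (hb : 0 < b) (hσ : 0 < σ) {t : ℝ} (ht : t ∈ Set.Ioo (-1:ℝ) 1) :
    HasDerivWithinAt (fun t => b * ((1+t)/2) ^ (1/σ))
      (b * ((1/σ) * (((1+t)/2) ^ (1/σ - 1) * (1/2)))) (Set.Ioo (-1:ℝ) 1) t := by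
  have hs0 : (0:ℝ) < (1+t)/2 := by have := ht.1; linarith
  have h1 : HasDerivAt (fun u : ℝ => (1+u)/2) (1/2) t := by
    simpa using ((hasDerivAt_id t).const_add 1).div_const 2
  have h2 : HasDerivAt (fun u : ℝ => ((1+u)/2) ^ (1/σ))
      ((1/2) * ((1/σ) * ((1+t)/2) ^ (1/σ - 1))) t := by
    simpa [mul_comm, mul_assoc, mul_left_comm] using
      (h1.rpow_const (Or.inl hs0.ne'))
  have := (h2.const_mul b).hasDerivWithinAt (s := Set.Ioo (-1:ℝ) 1)
  rw [show b * ((1/σ) * (((1+t)/2) ^ (1/σ - 1) * (1/2)))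
      = b * ((1/2) * ((1/σ) * ((1+t)/2) ^ (1/σ - 1))) by ring]
  exact this

end

theorem muntz_quadrature_first_kind
    (b σ α β η μ : ℝ) (hb : 0 < b) (hσ : 0 < σ) (hα : α > -1) (hβ : β > -1) (n : ℕ)
    (ξ ω : Fin (n + 1) → ℝ) (hξ : ∀ j, ξ j ∈ Set.Ioo (-1 : ℝ) 1)
    (hinj : Function.Injective ξ)
    (hquad : ∀ p : Polynomial ℝ, p.natDegree ≤ 2 * n + 1 →
      ∫ x in (-1 : ℝ)..1, p.eval x * ((1 - x) ^ α * (1 + x) ^ β) =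
        ∑ j, ω j * p.eval (ξ j))
    (f : ℝ → ℝ)
    (hf : f ∈ Submodule.span ℝ
      (Set.range fun k : Fin (2 * n + 2) =>
        fun x : ℝ => x ^ (2 * σ * (β - μ - η) + (k : ℕ) * σ))) :
    ∫ x in (0:ℝ)..b, f x * (x ^ (σ * (2 * (η + μ) - β + 1) - 1) * (b ^ σ - x ^ σ) ^ α) =
      ∑ j, ((1 / σ) * (b ^ σ / 2) ^ (α + β + 1) * ω j *
          (b * ((1 + ξ j) / 2) ^ (1 / σ)) ^ (2 * σ * (η + μ - β))) *
        f (b * ((1 + ξ j) / 2) ^ (1 / σ)) := by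
  obtain ⟨c, hc⟩ := (Submodule.mem_span_range_iff_exists_fun ℝ).1 hf
  have hfx : ∀ x : ℝ, f x = ∑ k : Fin (2*n+2), c k * x ^ (2*σ*(β-μ-η) + ((k:ℕ):ℝ)*σ) := by
    intro x
    rw [← hc]
    simp [Finset.sum_apply]
  set K : ℝ := 1/σ * (b^σ/2) ^ (α+β+1) with hK
  set p : Polynomial ℝ :=
    ∑ k : Fin (2*n+2), Polynomial.C (c k) * (Polynomial.C (b^σ/2) * (1 + Polynomial.X)) ^ (k:ℕ)
    with hp
  have hpeval : ∀ u : ℝ, p.eval u = ∑ k : Fin (2*n+2), c k * (b^σ/2 * (1+u)) ^ (k:ℕ) := by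
    intro u
    rw [hp, Polynomial.eval_finset_sum]
    exact Finset.sum_congr rfl fun k _ => by simp
  have hpdeg : p.natDegree ≤ 2*n + 1 := by
    apply Polynomial.natDegree_sum_le_of_forall_le
    intro k _
    calc (Polynomial.C (c k) * (Polynomial.C (b^σ/2) * (1 + Polynomial.X)) ^ (k:ℕ)).natDegree
        ≤ (Polynomial.C (c k)).natDegree
            + ((Polynomial.C (b^σ/2) * (1 + Polynomial.X)) ^ (k:ℕ)).natDegree :=
          Polynomial.natDegree_mul_le
      _ ≤ 0 + (k:ℕ) * (Polynomial.C (b^σ/2) * (1 + Polynomial.X)).natDegree := by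
          gcongr
          · exact le_of_eq (Polynomial.natDegree_C _)
          · exact Polynomial.natDegree_pow_le
      _ ≤ (k:ℕ) * 1 := by
          simp only [zero_add]
          gcongr
          calc (Polynomial.C (b^σ/2) * (1 + Polynomial.X)).natDegree
              ≤ (Polynomial.C (b^σ/2)).natDegree + (1 + Polynomial.X : Polynomial ℝ).natDegree :=
                Polynomial.natDegree_mul_le
            _ ≤ 0 + 1 := by
                gcongr
                · exact le_of_eq (Polynomial.natDegree_C _)
                · exact Polynomial.natDegree_add_le_of_degree_le (by simp) (by simp)
            _ = 1 := by norm_num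
      _ ≤ 2*n + 1 := by
          have := k.2
          omega
  have hquadp := hquad p hpdeg
  -- key pointwise identity on (-1,1)
  have hkey : ∀ t ∈ Set.Ioo (-1:ℝ) 1,
      |b * ((1/σ) * (((1+t)/2) ^ (1/σ - 1) * (1/2)))| •
        ((fun x : ℝ => f x * (x ^ (σ*(2*(η+μ)-β+1) - 1) * (b^σ - x^σ)^α))
          (b * ((1+t)/2) ^ (1/σ)))
      = K * (p.eval t * ((1-t)^α * (1+t)^β)) := by
    intro t ht
    obtain ⟨ht1, ht2⟩ := ht
    have hs0 : (0:ℝ) < (1+t)/2 := by linarith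
    have habs : |b * ((1/σ) * (((1+t)/2) ^ (1/σ - 1) * (1/2)))|
        = b * ((1/σ) * (((1+t)/2) ^ (1/σ - 1) * (1/2))) := by
      apply abs_of_pos
      have : (0:ℝ) < ((1+t)/2) ^ (1/σ - 1) := rpow_pos_of_pos hs0 _
      positivity
    rw [habs, smul_eq_mul]
    simp only
    rw [hfx, hpeval, Finset.sum_mul, Finset.mul_sum, Finset.sum_mul, Finset.mul_sum]
    refine Finset.sum_congr rfl fun k _ => ?_
    have haux := aux_term b σ α β η μ t hb hσ ⟨ht1, ht2⟩ (k:ℕ)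
    linear_combination (c k) * haux
  have himg := aux_img hb hσ (b := b)
  calc ∫ x in (0:ℝ)..b, f x * (x ^ (σ*(2*(η+μ)-β+1) - 1) * (b^σ - x^σ)^α)
      = ∫ x in Set.Ioo (0:ℝ) b, f x * (x ^ (σ*(2*(η+μ)-β+1) - 1) * (b^σ - x^σ)^α) := by
        rw [intervalIntegral.integral_of_le hb.le, MeasureTheory.integral_Ioc_eq_integral_Ioo]
    _ = ∫ t in Set.Ioo (-1:ℝ) 1,
          |b * ((1/σ) * (((1+t)/2) ^ (1/σ - 1) * (1/2)))| •
            ((fun x : ℝ => f x * (x ^ (σ*(2*(η+μ)-β+1) - 1) * (b^σ - x^σ)^α))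
              (b * ((1+t)/2) ^ (1/σ))) := by
        rw [← himg]
        exact integral_image_eq_integral_abs_deriv_smul measurableSet_Ioo
          (fun t ht => aux_deriv hb hσ ht) (aux_inj hb hσ) _
    _ = ∫ t in Set.Ioo (-1:ℝ) 1, K * (p.eval t * ((1-t)^α * (1+t)^β)) :=
        setIntegral_congr_fun measurableSet_Ioo hkey
    _ = K * ∫ t in Set.Ioo (-1:ℝ) 1, p.eval t * ((1-t)^α * (1+t)^β) :=
        MeasureTheory.integral_const_mul _ _
    _ = K * ∫ t in (-1:ℝ)..1, p.eval t * ((1-t)^α * (1+t)^β) := by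
        rw [intervalIntegral.integral_of_le (by norm_num : (-1:ℝ) ≤ 1),
          MeasureTheory.integral_Ioc_eq_integral_Ioo]
    _ = K * ∑ j, ω j * p.eval (ξ j) := by rw [hquadp]
    _ = ∑ j, (1/σ * (b^σ/2) ^ (α+β+1) * ω j *
          (b * ((1 + ξ j)/2) ^ (1/σ)) ^ (2*σ*(η+μ-β))) * f (b * ((1 + ξ j)/2) ^ (1/σ)) := by
        rw [Finset.mul_sum]
        refine Finset.sum_congr rfl fun j _ => ?_
        have hξj := hξ j
        have hs0 : (0:ℝ) < (1 + ξ j)/2 := by have := hξj.1; linarith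
        have hxj : (0:ℝ) < b * ((1 + ξ j)/2) ^ (1/σ) :=
          mul_pos hb (rpow_pos_of_pos hs0 _)
        have hxσ : (b * ((1 + ξ j)/2) ^ (1/σ)) ^ σ = b^σ * ((1 + ξ j)/2) :=
          aux_phi_sigma hb hσ hs0
        rw [hfx, hpeval]
        simp only [Finset.mul_sum]
        refine Finset.sum_congr rfl fun k _ => ?_
        have hpow : (b * ((1 + ξ j)/2) ^ (1/σ)) ^ (2*σ*(η+μ-β))
              * (b * ((1 + ξ j)/2) ^ (1/σ)) ^ (2*σ*(β-μ-η) + ((k:ℕ):ℝ)*σ)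
            = (b^σ/2 * (1 + ξ j)) ^ (k:ℕ) := by
          rw [← rpow_add hxj,
            show 2*σ*(η+μ-β) + (2*σ*(β-μ-η) + ((k:ℕ):ℝ)*σ) = σ * ((k:ℕ):ℝ) by ring,
            rpow_mul hxj.le, hxσ, rpow_natCast]
          congr 1
          ring
        linear_combination (-(K * ω j * c k)) * hpow
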